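/- arXiv:1903.03334 — 5 statements merged into one kernel-verified Lean document; each statement's English description precedes it below -/
import Mathlib

section
/- The homomorphism φ : F_a → F_b is injective. -/
/-- The generating alphabet `X ⊔ Y ⊔ {y} ⊔ {indexed family over ℕ}`.  In the domain
`F_a` the `ℕ`-indexed generators are the `t_n`; in the codomain `F_b` they are the
`z_n`. -/
abbrev ConstrGen (X Y : Type) : Type := X ⊕ Y ⊕ Unit ⊕ ℕ

/-- The distinguished generator `y`. -/
def yGen (X Y : Type) : ConstrGen X Y := Sum.inr (Sum.inr (Sum.inl ()))

/-- The `n`-th `ℕ`-indexed generator (`t_n` in `F_a`, `z_n` in `F_b`). -/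
def nGen (X Y : Type) (n : ℕ) : ConstrGen X Y := Sum.inr (Sum.inr (Sum.inr n))

/-- The homomorphism `φ : F_a → F_b` which fixes each generator in `X ⊔ Y ⊔ {y}`
and sends `t_n ↦ y·z_{n+1}⁻¹·z_n·z_{n+1}`. -/
def constrPhi (X Y : Type) : FreeGroup (ConstrGen X Y) →* FreeGroup (ConstrGen X Y) :=
  FreeGroup.lift fun g => match g with
    | Sum.inl x => FreeGroup.of (Sum.inl x)
    | Sum.inr (Sum.inl w) => FreeGroup.of (Sum.inr (Sum.inl w))
    | Sum.inr (Sum.inr (Sum.inl _)) => FreeGroup.of (yGen X Y)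
    | Sum.inr (Sum.inr (Sum.inr n)) =>
        FreeGroup.of (yGen X Y) * (FreeGroup.of (nGen X Y (n + 1)))⁻¹ *
          FreeGroup.of (nGen X Y n) * FreeGroup.of (nGen X Y (n + 1))

namespace ConstrAux

variable (X Y : Type)

/-- Fuel-indexed auxiliary elements: `vAux k n` is `u_n` when the fuel is `k = N+1-n`. -/
def vAux : ℕ → ℕ → FreeGroup (ConstrGen X Y)
  | 0, _ => 1
  | (k+1), n =>
      vAux k (n+1) * (FreeGroup.of (yGen X Y))⁻¹ * FreeGroup.of (nGen X Y n) *
        (vAux k (n+1))⁻¹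

/-- `uAux N n` is the image of `z_n` under the partial retraction adapted to bound `N`. -/
def uAux (N n : ℕ) : FreeGroup (ConstrGen X Y) := vAux X Y (N + 1 - n) n

lemma uAux_succ {N n : ℕ} (h : n ≤ N) :
    uAux X Y N n = uAux X Y N (n+1) * (FreeGroup.of (yGen X Y))⁻¹ *
      FreeGroup.of (nGen X Y n) * (uAux X Y N (n+1))⁻¹ := by
  unfold uAux
  have hk : N + 1 - n = (N + 1 - (n+1)) + 1 := by omega
  rw [hk, vAux]

/-- The partial retraction adapted to bound `N`. -/
def psi (N : ℕ) : FreeGroup (ConstrGen X Y) →* FreeGroup (ConstrGen X Y) :=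
  FreeGroup.lift fun g => match g with
    | Sum.inl x => FreeGroup.of (Sum.inl x)
    | Sum.inr (Sum.inl w) => FreeGroup.of (Sum.inr (Sum.inl w))
    | Sum.inr (Sum.inr (Sum.inl _)) => FreeGroup.of (yGen X Y)
    | Sum.inr (Sum.inr (Sum.inr n)) => uAux X Y N n

/-- The index of a generator: `n` for `z_n`/`t_n`, and `0` otherwise. -/
def idx : ConstrGen X Y → ℕ
  | Sum.inr (Sum.inr (Sum.inr n)) => n
  | _ => 0

lemma psi_phi_of {N : ℕ} {a : ConstrGen X Y} (h : idx X Y a ≤ N) :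
    psi X Y N (constrPhi X Y (FreeGroup.of a)) = FreeGroup.of a := by
  rcases a with x | w | u | n
  · simp [constrPhi, psi]
  · simp [constrPhi, psi]
  · simp [constrPhi, psi, yGen]
  · have hn : idx X Y (Sum.inr (Sum.inr (Sum.inr n))) = n := rfl
    rw [hn] at h
    have key := uAux_succ X Y (N := N) (n := n) h
    simp only [yGen, nGen] at key
    simp only [constrPhi, psi, yGen, nGen, FreeGroup.lift_apply_of, map_mul, map_inv]
    rw [key]
    group

lemma agree_on_word (f : FreeGroup (ConstrGen X Y) →* FreeGroup (ConstrGen X Y))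
    (L : List (ConstrGen X Y × Bool))
    (h : ∀ p ∈ L, f (FreeGroup.of p.1) = FreeGroup.of p.1) :
    f (FreeGroup.mk L) = FreeGroup.mk L := by
  induction L with
  | nil => rw [← FreeGroup.one_eq_mk]; exact map_one f
  | cons p L ih =>
    have hsplit : (FreeGroup.mk (p :: L) : FreeGroup (ConstrGen X Y)) =
        FreeGroup.mk [p] * FreeGroup.mk L := by
      rw [FreeGroup.mul_mk]; rfl
    have hL : f (FreeGroup.mk L) = FreeGroup.mk L :=
      ih fun q hq => h q (List.mem_cons_of_mem _ hq)
    have hp : f (FreeGroup.mk [p]) = FreeGroup.mk [p] := by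
      obtain ⟨a, b⟩ := p
      cases b
      · have : (FreeGroup.mk [(a, false)] : FreeGroup (ConstrGen X Y)) =
            (FreeGroup.of a)⁻¹ := by
          rw [show (FreeGroup.of a : FreeGroup (ConstrGen X Y)) =
              FreeGroup.mk [(a, true)] from rfl, FreeGroup.inv_mk]
          rfl
        rw [this, map_inv, h (a, false) List.mem_cons_self]
      · exact h (a, true) List.mem_cons_self
    rw [hsplit, map_mul, hp, hL]

end ConstrAux

/-- The homomorphism `φ : F_a → F_b` is injective. -/
theorem constrPhi_injective (X Y : Type) : Function.Injective (constrPhi X Y) := by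
  intro g h hgh
  obtain ⟨Lg, rfl⟩ : ∃ L, FreeGroup.mk L = g :=
    ⟨(Quot.exists_rep g).choose, FreeGroup.quot_mk_eq_mk ▸ (Quot.exists_rep g).choose_spec⟩
  obtain ⟨Lh, rfl⟩ : ∃ L, FreeGroup.mk L = h :=
    ⟨(Quot.exists_rep h).choose, FreeGroup.quot_mk_eq_mk ▸ (Quot.exists_rep h).choose_spec⟩
  set L : List (ConstrGen X Y × Bool) := Lg ++ Lh with hL
  set N : ℕ := (L.map fun p => ConstrAux.idx X Y p.1).sum with hN
  have hbound : ∀ p ∈ L, ConstrAux.idx X Y p.1 ≤ N := by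
    intro p hp
    exact List.single_le_sum (fun _ _ => Nat.zero_le _) _
      (List.mem_map_of_mem hp)
  have key : ∀ M : List (ConstrGen X Y × Bool), (∀ p ∈ M, p ∈ L) →
      ConstrAux.psi X Y N (constrPhi X Y (FreeGroup.mk M)) = FreeGroup.mk M := by
    intro M hM
    exact ConstrAux.agree_on_word X Y ((ConstrAux.psi X Y N).comp (constrPhi X Y)) _
      (fun p hp => ConstrAux.psi_phi_of X Y (hbound p (hM p hp)))
  have hg := key Lg (fun p hp => List.mem_append_left _ hp)
  have hh := key Lh (fun p hp => List.mem_append_right _ hp)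
  rw [← hg, ← hh, hgh]
end

section
/- For every n ∈ ℕ, the generator z_n does not belong to the image φ(F_a). -/
/-- Auxiliary homomorphism to permutations of ℕ: kill all generators except the
`z_k`, which act as the transposition `(0 (k+2))`. -/
def constrPsi (X Y : Type) : FreeGroup (ConstrGen X Y) →* Equiv.Perm ℕ :=
  FreeGroup.lift fun g => match g with
    | Sum.inl _ => 1
    | Sum.inr (Sum.inl _) => 1
    | Sum.inr (Sum.inr (Sum.inl _)) => 1
    | Sum.inr (Sum.inr (Sum.inr k)) => Equiv.swap 0 (k + 2)

theorem constrPsi_phi_fixes (X Y : Type) (a : FreeGroup (ConstrGen X Y)) :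
    (constrPsi X Y) ((constrPhi X Y) a) 0 = 0 := by
  induction a with
  | C1 => simp
  | of x =>
    have hp : (pure x : FreeGroup (ConstrGen X Y)) = FreeGroup.of x := rfl
    rcases x with x | w | u | k
    · simp [constrPhi, constrPsi]
    · simp [constrPhi, constrPsi]
    · simp [constrPhi, constrPsi, yGen]
    · have h1 : (3 : ℕ) + k ≠ 0 := by omega
      have h2 : (3 : ℕ) + k ≠ 2 + k := by omega
      simp [constrPhi, constrPsi, yGen, nGen, Equiv.Perm.mul_apply,
        Equiv.swap_apply_of_ne_of_ne, Nat.add_comm,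
        Equiv.swap_apply_left, Equiv.swap_apply_of_ne_of_ne h1 h2]
  | inv_of x h =>
    rw [map_inv, map_inv]
    have : ((constrPsi X Y) ((constrPhi X Y) (FreeGroup.of x)))⁻¹ 0
        = ((constrPsi X Y) ((constrPhi X Y) (FreeGroup.of x)))⁻¹
          (((constrPsi X Y) ((constrPhi X Y) (FreeGroup.of x))) 0) := by rw [h]
    rw [this, ← Equiv.Perm.mul_apply, inv_mul_cancel, Equiv.Perm.one_apply]
  | mul a b ha hb =>
    rw [map_mul, map_mul, Equiv.Perm.mul_apply, hb, ha]

/-- For every `n ∈ ℕ`, the generator `z_n` does not belong to the image `φ(F_a)`. -/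
theorem zGen_not_mem_range_constrPhi (X Y : Type) (n : ℕ) :
    FreeGroup.of (nGen X Y n) ∉ (constrPhi X Y).range := by
  rintro ⟨g, hg⟩
  have h := constrPsi_phi_fixes X Y g
  rw [hg] at h
  have : (constrPsi X Y) (FreeGroup.of (nGen X Y n)) 0 = n + 2 := by
    simp [constrPsi, nGen]
  omega
end

section
/- The subgroup φ(F_a) is not a free factor of F_b. -/
/-- A subgroup `H` of a group `G` is a *free factor* of `G` if there exists a subgroup
`K ≤ G` such that the natural map `H ∗ K → G` induced by the inclusions is an
isomorphism. -/
def IsFreeFactor {G : Type*} [Group G] (H : Subgroup G) : Prop :=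
  ∃ K : Subgroup G, Function.Bijective (Monoid.Coprod.lift H.subtype K.subtype)

/-- A permutation representation of `F_b` on `ℕ`: all generators except the `z_n`
act trivially, and `z_n` acts by the transposition `(0 (n+1))`. -/
def permRep (X Y : Type) : FreeGroup (ConstrGen X Y) →* Equiv.Perm ℕ :=
  FreeGroup.lift fun g => match g with
    | Sum.inr (Sum.inr (Sum.inr n)) => Equiv.swap 0 (n + 1)
    | _ => 1

lemma pure_eq_of {α : Type} (g : α) : (pure g : FreeGroup α) = FreeGroup.of g := rfl

lemma permRep_of_nGen (X Y : Type) (n : ℕ) :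
    permRep X Y (FreeGroup.of (nGen X Y n)) = Equiv.swap 0 (n + 1) := by
  simp [permRep, nGen]

lemma permRep_of_yGen (X Y : Type) :
    permRep X Y (FreeGroup.of (yGen X Y)) = 1 := by
  simp [permRep, yGen]

lemma constrPhi_of_nGen (X Y : Type) (n : ℕ) :
    constrPhi X Y (FreeGroup.of (nGen X Y n)) =
      FreeGroup.of (yGen X Y) * (FreeGroup.of (nGen X Y (n + 1)))⁻¹ *
        FreeGroup.of (nGen X Y n) * FreeGroup.of (nGen X Y (n + 1)) := by
  simp [constrPhi, nGen]

lemma permRep_constrPhi_fixes (X Y : Type) (w : FreeGroup (ConstrGen X Y)) :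
    permRep X Y (constrPhi X Y w) 0 = 0 := by
  induction w using FreeGroup.induction_on with
  | C1 => simp
  | of g =>
    rcases g with x | x | x | n
    · simp [constrPhi, permRep]
    · simp [constrPhi, permRep]
    · rw [show Sum.inr (Sum.inr (Sum.inl x)) = yGen X Y by cases x; rfl]
      rw [show constrPhi X Y (FreeGroup.of (yGen X Y)) = FreeGroup.of (yGen X Y) by
        simp [constrPhi, yGen]]
      simp [permRep_of_yGen]
    · rw [show Sum.inr (Sum.inr (Sum.inr n)) = nGen X Y n from rfl, constrPhi_of_nGen]
      simp only [map_mul, map_inv, permRep_of_nGen, permRep_of_yGen, one_mul,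
        Equiv.swap_inv, Equiv.Perm.mul_apply]
      rw [Equiv.swap_apply_left,
        Equiv.swap_apply_of_ne_of_ne (show (n : ℕ) + 2 ≠ 0 by omega)
          (show (n : ℕ) + 2 ≠ n + 1 by omega),
        Equiv.swap_apply_right]
  | inv_of g h =>
    rw [map_inv, map_inv]
    conv_lhs => rw [← h]
    simp
  | mul a b ha hb =>
    simp only [map_mul, Equiv.Perm.mul_apply, hb, ha]


/-- The subgroup `φ(F_a)` is not a free factor of `F_b`. -/
theorem range_constrPhi_not_isFreeFactor (X Y : Type) :
    ¬ IsFreeFactor (constrPhi X Y).range := by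
  rintro ⟨K, hbij⟩
  set H := (constrPhi X Y).range with hH
  -- z_0 is not in H
  have hz0 : FreeGroup.of (nGen X Y 0) ∉ H := by
    rintro ⟨v, hv⟩
    have h1 := permRep_constrPhi_fixes X Y v
    rw [hv, permRep_of_nGen] at h1
    simp at h1
  -- the normal closure of H is everything
  have hyH : FreeGroup.of (yGen X Y) ∈ H :=
    ⟨FreeGroup.of (yGen X Y), by simp [constrPhi, yGen]⟩
  have hwH : ∀ n : ℕ, constrPhi X Y (FreeGroup.of (nGen X Y n)) ∈ H := fun n => ⟨_, rfl⟩
  have hncmem : ∀ w : FreeGroup (ConstrGen X Y),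
      w ∈ Subgroup.normalClosure (H : Set (FreeGroup (ConstrGen X Y))) := by
    intro w
    induction w using FreeGroup.induction_on with
    | C1 => exact one_mem _
    | of g =>
      have hsub := Subgroup.subset_normalClosure (s := (H : Set (FreeGroup (ConstrGen X Y))))
      rcases g with x | x | x | n
      · exact hsub ⟨FreeGroup.of (Sum.inl x), by simp [constrPhi]⟩
      · exact hsub ⟨FreeGroup.of (Sum.inr (Sum.inl x)), by simp [constrPhi]⟩
      · rw [show Sum.inr (Sum.inr (Sum.inl x)) = yGen X Y by cases x; rfl]
        exact hsub hyH
      · -- z_n = z_{n+1} * (y⁻¹ * w_n) * z_{n+1}⁻¹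
        have hmem : (FreeGroup.of (yGen X Y))⁻¹ * constrPhi X Y (FreeGroup.of (nGen X Y n)) ∈
            Subgroup.normalClosure (H : Set (FreeGroup (ConstrGen X Y))) :=
          mul_mem (inv_mem (hsub hyH)) (hsub (hwH n))
        have hconj := (Subgroup.normalClosure_normal
          (s := (H : Set (FreeGroup (ConstrGen X Y))))).conj_mem _ hmem
          (FreeGroup.of (nGen X Y (n + 1)))
        have heq : FreeGroup.of (nGen X Y (n + 1)) *
            ((FreeGroup.of (yGen X Y))⁻¹ * constrPhi X Y (FreeGroup.of (nGen X Y n))) *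
            (FreeGroup.of (nGen X Y (n + 1)))⁻¹ = FreeGroup.of (nGen X Y n) := by
          rw [constrPhi_of_nGen]
          group
        rw [heq] at hconj
        exact hconj
    | inv_of g h => exact inv_mem h
    | mul a b ha hb => exact mul_mem ha hb
  -- build the retraction onto K
  set e : Monoid.Coprod H K ≃* FreeGroup (ConstrGen X Y) :=
    MulEquiv.ofBijective _ hbij with he
  set r : FreeGroup (ConstrGen X Y) →* K :=
    (Monoid.Coprod.lift (1 : H →* K) (MonoidHom.id K)).comp e.symm.toMonoidHom with hr
  have hrH : ∀ h ∈ H, r h = 1 := by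
    intro h hh
    have hsymm : e.symm h = Monoid.Coprod.inl ⟨h, hh⟩ := by
      rw [MulEquiv.symm_apply_eq, he, MulEquiv.ofBijective_apply, Monoid.Coprod.lift_apply_inl]
      rfl
    simp [hr, hsymm]
  have hrK : ∀ k : K, r (k : FreeGroup (ConstrGen X Y)) = k := by
    intro k
    have hsymm : e.symm (k : FreeGroup (ConstrGen X Y)) = Monoid.Coprod.inr k := by
      rw [MulEquiv.symm_apply_eq, he, MulEquiv.ofBijective_apply, Monoid.Coprod.lift_apply_inr]
      rfl
    simp [hr, hsymm]
  -- r is trivial since its kernel contains the normal closure of H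
  have hker : ∀ w : FreeGroup (ConstrGen X Y), r w = 1 := by
    intro w
    have hle : Subgroup.normalClosure (H : Set (FreeGroup (ConstrGen X Y))) ≤ r.ker :=
      Subgroup.normalClosure_le_normal (fun x hx => hrH x hx)
    exact hle (hncmem w)
  -- hence K is trivial
  have hKbot : K = ⊥ := by
    rw [eq_bot_iff]
    intro k hk
    have h2 : (⟨k, hk⟩ : K) = 1 := by rw [← hrK ⟨k, hk⟩]; exact hker k
    rw [Subgroup.mem_bot]
    simpa using congrArg Subtype.val h2
  -- surjectivity now forces H = ⊤
  have hHtop : H = ⊤ := by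
    have hrange : (Monoid.Coprod.lift H.subtype K.subtype).range = ⊤ :=
      MonoidHom.range_eq_top_of_surjective _ hbij.surjective
    rw [Monoid.Coprod.range_lift, Subgroup.range_subtype, Subgroup.range_subtype,
      hKbot, sup_bot_eq] at hrange
    exact hrange
  exact hz0 (hHtop ▸ Subgroup.mem_top _)
end

section
/- If κ is an uncountable regular cardinal, then every stationary subset of κ can be decomposed as the disjoint union of κ many stationary subsets of κ. -/
/-- A set `C` of ordinals is *club in* `α` if it is a subset of `α` (i.e. of the
ordinals below `α`), unbounded in `α`, and closed in the order topology on `α`. -/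
def IsClubIn (C : Set Ordinal) (α : Ordinal) : Prop :=
  C ⊆ Set.Iio α ∧ (∀ β < α, ∃ γ ∈ C, β ≤ γ) ∧
    ∀ β < α, (C ∩ Set.Iio β).Nonempty → sSup (C ∩ Set.Iio β) = β → β ∈ C

/-- A set `E` of ordinals is *stationary in* `α` if it is a subset of `α` and meets
every club subset of `α`. -/
def IsStationaryIn (E : Set Ordinal) (α : Ordinal) : Prop :=
  E ⊆ Set.Iio α ∧ ∀ C : Set Ordinal, IsClubIn C α → (E ∩ C).Nonempty


namespace SolovayProof

open Ordinal Set Cardinal Order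

lemma bddAbove_of_subset_Iio {S : Set Ordinal} {β : Ordinal} (h : S ⊆ Set.Iio β) :
    BddAbove S := ⟨β, fun _ hy => (h hy).le⟩

lemma sSup_eq_of_cofinal {S : Set Ordinal} {β : Ordinal} (hsub : S ⊆ Set.Iio β)
    (hne : S.Nonempty) (hcof : ∀ x < β, ∃ y ∈ S, x < y) : sSup S = β := by
  apply le_antisymm
  · exact csSup_le hne fun y hy => (hsub hy).le
  · refine le_of_forall_lt fun x hx => ?_
    obtain ⟨y, hyS, hxy⟩ := hcof x hx
    exact hxy.trans_le (le_csSup (bddAbove_of_subset_Iio hsub) hyS)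

lemma exists_gt_of_sSup_eq {S : Set Ordinal} {β : Ordinal} (hne : S.Nonempty)
    (hs : sSup S = β) {x : Ordinal} (hx : x < β) : ∃ y ∈ S, x < y := by
  by_contra h
  push_neg at h
  exact absurd (hs ▸ csSup_le hne h) hx.not_ge

/-- Accumulation (limit) points of a set of ordinals. -/
def acc (C : Set Ordinal) : Set Ordinal :=
  {β | (C ∩ Set.Iio β).Nonempty ∧ sSup (C ∩ Set.Iio β) = β}

lemma mem_acc_of_cofinal {C : Set Ordinal} {s : Ordinal} (hpos : 0 < s)
    (hcof : ∀ x < s, ∃ y ∈ C, x < y ∧ y < s) : s ∈ acc C := by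
  obtain ⟨y0, hy0, _, hy0s⟩ := hcof 0 hpos
  refine ⟨⟨y0, hy0, hy0s⟩, sSup_eq_of_cofinal (fun z hz => hz.2) ⟨y0, hy0, hy0s⟩ ?_⟩
  intro x hx
  obtain ⟨y, hy, hxy, hys⟩ := hcof x hx
  exact ⟨y, ⟨hy, hys⟩, hxy⟩

lemma acc_exists_gt {C : Set Ordinal} {s : Ordinal} (h : s ∈ acc C) {x : Ordinal}
    (hx : x < s) : ∃ y ∈ C, x < y ∧ y < s := by
  obtain ⟨y, ⟨hyC, hys⟩, hxy⟩ := exists_gt_of_sSup_eq h.1 h.2 hx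
  exact ⟨y, hyC, hxy, hys⟩

lemma club_mem_of_cofinal {C : Set Ordinal} {α : Ordinal} (hC : IsClubIn C α) {s : Ordinal}
    (hs : s < α) (hpos : 0 < s) (hcof : ∀ x < s, ∃ y ∈ C, x < y ∧ y < s) : s ∈ C := by
  obtain ⟨y0, hy0, _, hy0s⟩ := hcof 0 hpos
  refine hC.2.2 s hs ⟨y0, hy0, hy0s⟩ (sSup_eq_of_cofinal (fun z hz => hz.2) ⟨y0, hy0, hy0s⟩ ?_)
  intro x hx
  obtain ⟨y, hy, hxy, hys⟩ := hcof x hx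
  exact ⟨y, ⟨hy, hys⟩, hxy⟩

lemma club_exists_gt {C : Set Ordinal} {α : Ordinal} (hC : IsClubIn C α)
    (hα : IsSuccLimit α) {β : Ordinal} (hβ : β < α) : ∃ γ ∈ C, β < γ ∧ γ < α := by
  obtain ⟨γ, hγC, hγ⟩ := hC.2.1 (succ β) (hα.succ_lt hβ)
  exact ⟨γ, hγC, (lt_succ β).trans_le hγ, hC.1 hγC⟩

lemma exists_lt_of_lt_iSup {b : ℕ → Ordinal.{0}} {x : Ordinal} (h : x < ⨆ n, b n) :
    ∃ n, x < b n := by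
  by_contra hc
  push_neg at hc
  exact absurd (ciSup_le' hc) h.not_ge

section Regular

variable {κ : Cardinal.{0}} (hreg : κ.IsRegular) (hunc : Cardinal.aleph0 < κ)



include hreg in
lemma klim : IsSuccLimit κ.ord := Cardinal.isSuccLimit_ord hreg.aleph0_le

include hreg hunc in
lemma ksup_nat_lt {b : ℕ → Ordinal.{0}} (hb : ∀ n, b n < κ.ord) : (⨆ n, b n) < κ.ord := by
  refine Ordinal.iSup_lt_ord ?_ hb
  rw [Cardinal.mk_nat, hreg.cof_eq]
  exact hunc

end Regular

end SolovayProof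

namespace SolovayProof

open Ordinal Set Cardinal Order

variable {κ : Cardinal.{0}} (hreg : κ.IsRegular) (hunc : Cardinal.aleph0 < κ)

lemma isClubIn_Iio : IsClubIn (Set.Iio κ.ord) κ.ord :=
  ⟨fun _ h => h, fun β hβ => ⟨β, hβ, le_rfl⟩, fun β hβ _ _ => hβ⟩

include hreg hunc in
/-- The intersection of fewer than `κ` clubs (indexed by ordinals below `i`) is club. -/
lemma isClubIn_iInter {i : Ordinal.{0}} (hi : i.card < κ) {C : Ordinal → Set Ordinal}
    (hC : ∀ j < i, IsClubIn (C j) κ.ord) :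
    IsClubIn {β | β < κ.ord ∧ ∀ j < i, β ∈ C j} κ.ord := by
  have hklim : IsSuccLimit κ.ord := klim hreg
  refine ⟨fun β hβ => hβ.1, ?_, ?_⟩
  · -- unboundedness
    intro β₀ hβ₀
    -- step function
    have hstep : ∀ x, ∃ y, x < κ.ord → (x < y ∧ y < κ.ord ∧ ∀ j < i, ∃ z ∈ C j, x < z ∧ z ≤ y) := by
      intro x
      by_cases hx : x < κ.ord
      · have h1 : ∀ j, ∃ z, j < i → (z ∈ C j ∧ x < z) := by
          intro j
          by_cases hj : j < i
          · obtain ⟨z, hz, hxz, _⟩ := club_exists_gt (hC j hj) hklim hx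
            exact ⟨z, fun _ => ⟨hz, hxz⟩⟩
          · exact ⟨0, fun h => absurd h hj⟩
        choose e he using h1
        refine ⟨max (x + 1) (Ordinal.bsup i fun j _ => e j), fun _ => ?_⟩
        have hy1 : x < max (x + 1) (Ordinal.bsup i fun j _ => e j) :=
          (lt_succ x).trans_le (Ordinal.add_one_eq_succ x ▸ le_max_left _ _)
        have hy2 : max (x + 1) (Ordinal.bsup i fun j _ => e j) < κ.ord := by
          apply max_lt
          · rw [Ordinal.add_one_eq_succ]; exact hklim.succ_lt hx
          · refine Ordinal.bsup_lt_ord (by rwa [hreg.cof_eq]) fun j hj => ?_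
            exact ((hC j hj).1 (he j hj).1)
        refine ⟨hy1, hy2, fun j hj => ⟨e j, (he j hj).1, (he j hj).2, ?_⟩⟩
        exact le_trans (Ordinal.le_bsup (fun j _ => e j) j hj) (le_max_right _ _)
      · exact ⟨0, fun h => absurd h hx⟩
    choose g hg using hstep
    set b : ℕ → Ordinal := fun n => Nat.rec β₀ (fun _ ih => g ih) n with hb
    have hbsucc : ∀ n, b (n + 1) = g (b n) := fun n => rfl
    have hblt : ∀ n, b n < κ.ord := by
      intro n
      induction n with
      | zero => exact hβ₀
      | succ n ih => rw [hbsucc]; exact (hg (b n) ih).2.1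
    have hbmono : StrictMono b := by
      apply strictMono_nat_of_lt_succ
      intro n
      rw [hbsucc]
      exact (hg (b n) (hblt n)).1
    set s := ⨆ n, b n with hs
    have hslt : s < κ.ord := ksup_nat_lt hreg hunc hblt
    have hble : ∀ n, b n ≤ s := fun n => le_ciSup (Ordinal.bddAbove_range _) n
    refine ⟨s, ⟨hslt, fun j hj => ?_⟩, (hble 0)⟩
    -- s ∈ C j by closedness
    have hpos : 0 < s :=
      lt_of_le_of_lt ((zero_le : 0 ≤ b 0)) ((hbmono Nat.zero_lt_one).trans_le (hble 1))
    refine club_mem_of_cofinal (hC j hj) hslt hpos fun x hx => ?_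
    obtain ⟨n, hn⟩ := exists_lt_of_lt_iSup hx
    obtain ⟨z, hzC, hbz, hzle⟩ := (hg (b n) (hblt n)).2.2 j hj
    refine ⟨z, hzC, hn.trans hbz, ?_⟩
    calc z ≤ b (n + 1) := by rw [hbsucc]; exact hzle
      _ < b (n + 2) := hbmono (Nat.lt_succ_self (n + 1))
      _ ≤ s := hble (n + 2)
  · -- closedness
    intro β hβ hne hsup
    refine ⟨hβ, fun j hj => ?_⟩
    obtain ⟨δ, hδ⟩ := hne
    have hsub : {β | β < κ.ord ∧ ∀ j < i, β ∈ C j} ∩ Set.Iio β ⊆ C j ∩ Set.Iio β :=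
      fun z hz => ⟨hz.1.2 j hj, hz.2⟩
    refine (hC j hj).2.2 β hβ ⟨δ, hsub hδ⟩ ?_
    apply le_antisymm
    · exact csSup_le ⟨δ, hsub hδ⟩ fun z hz => hz.2.le
    · have h2 := csSup_le_csSup
        (bddAbove_of_subset_Iio (fun z (hz : z ∈ C j ∩ Set.Iio β) => hz.2)) ⟨δ, hδ⟩ hsub
      rwa [hsup] at h2

end SolovayProof

namespace SolovayProof

open Ordinal Set Cardinal Order

variable {κ : Cardinal.{0}} (hreg : κ.IsRegular) (hunc : Cardinal.aleph0 < κ)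

include hreg hunc in
lemma isClubIn_inter {A B : Set Ordinal} (hA : IsClubIn A κ.ord) (hB : IsClubIn B κ.ord) :
    IsClubIn (A ∩ B) κ.ord := by
  have h2 : ((2 : Ordinal)).card < κ := by
    rw [(by norm_num : (2 : Ordinal) = (2 : ℕ)), Ordinal.card_nat]
    exact (Cardinal.nat_lt_aleph0 2).trans hunc
  have key := isClubIn_iInter hreg hunc h2 (C := fun j => if j = 0 then A else B) ?_
  · have hset : {β | β < κ.ord ∧ ∀ j < (2 : Ordinal), β ∈ (if j = 0 then A else B)} = A ∩ B := by
      ext β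
      constructor
      · intro ⟨_, h⟩
        have h0 := h 0 (by norm_num)
        have h1 := h 1 (by norm_num)
        simp only [if_pos rfl] at h0
        simp only [one_ne_zero, if_false] at h1
        exact ⟨h0, h1⟩
      · intro ⟨hA', hB'⟩
        refine ⟨hA.1 hA', fun j hj => ?_⟩
        by_cases hj0 : j = 0
        · simp [hj0, hA']
        · simp [hj0, hB']
    rwa [hset] at key
  · intro j hj
    by_cases hj0 : j = 0
    · simpa [hj0] using hA
    · simpa [hj0] using hB

include hreg in
lemma isClubIn_Ioi {β : Ordinal} (hβ : β < κ.ord) :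
    IsClubIn (Set.Ioi β ∩ Set.Iio κ.ord) κ.ord := by
  have hklim : IsSuccLimit κ.ord := klim hreg
  refine ⟨fun x hx => hx.2, ?_, ?_⟩
  · intro x hx
    refine ⟨max (succ β) x, ⟨?_, ?_⟩, le_max_right _ _⟩
    · exact (lt_succ β).trans_le (le_max_left _ _)
    · exact max_lt (hklim.succ_lt hβ) hx
  · intro y hy hne hsup
    obtain ⟨δ, ⟨hδ1, _⟩, hδy⟩ := hne
    exact ⟨Set.mem_Ioi.2 ((Set.mem_Ioi.1 hδ1).trans hδy), hy⟩

include hreg hunc in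
lemma isClubIn_limits : IsClubIn ({α | IsSuccLimit α} ∩ Set.Iio κ.ord) κ.ord := by
  refine ⟨fun x hx => hx.2, ?_, ?_⟩
  · intro x hx
    have hcard : (x + ω).card < κ := by
      rw [Ordinal.card_add, Ordinal.card_omega0]
      exact Cardinal.add_lt_of_lt hreg.aleph0_le ((Cardinal.lt_ord).1 hx) hunc
    refine ⟨x + ω, ⟨Ordinal.isSuccLimit_add x Ordinal.isSuccLimit_omega0, Cardinal.lt_ord.2 hcard⟩, ?_⟩
    exact le_self_add
  · intro y hy hne hsup
    obtain ⟨δ, hδ⟩ := hne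
    refine ⟨Ordinal.isSuccLimit_iff.2 ⟨?_, isSuccPrelimit_of_succ_lt ?_⟩, hy⟩
    · rintro rfl
      exact absurd hδ.2 (not_lt_of_ge (zero_le : 0 ≤ δ))
    · intro a ha
      obtain ⟨z, ⟨⟨hzlim, _⟩, hzy⟩, haz⟩ := exists_gt_of_sSup_eq ⟨δ, hδ⟩ hsup ha
      exact (hzlim.succ_lt haz).trans hzy

end SolovayProof

namespace SolovayProof

open Ordinal Set Cardinal Order

variable {κ : Cardinal.{0}} (hreg : κ.IsRegular) (hunc : Cardinal.aleph0 < κ)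

include hreg hunc in
/-- The diagonal intersection of `κ` clubs is club. -/
lemma isClubIn_diagInter {C : Ordinal → Set Ordinal}
    (hC : ∀ j < κ.ord, IsClubIn (C j) κ.ord) :
    IsClubIn {β | β < κ.ord ∧ ∀ j < β, β ∈ C j} κ.ord := by
  have hklim : IsSuccLimit κ.ord := klim hreg
  refine ⟨fun β hβ => hβ.1, ?_, ?_⟩
  · -- unbounded
    intro β₀ hβ₀
    have hstep : ∀ x, ∃ y, x < κ.ord → (x < y ∧ y < κ.ord ∧ ∀ j < x, y ∈ C j) := by
      intro x
      by_cases hx : x < κ.ord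
      · have hclub := isClubIn_iInter hreg hunc (Cardinal.lt_ord.1 hx)
          (C := C) (fun j hj => hC j (hj.trans hx))
        obtain ⟨y, ⟨hy1, hy2⟩, hy3, _⟩ := club_exists_gt hclub hklim hx
        exact ⟨y, fun _ => ⟨hy3, hy1, hy2⟩⟩
      · exact ⟨0, fun h => absurd h hx⟩
    choose g hg using hstep
    set b : ℕ → Ordinal := fun n => Nat.rec β₀ (fun _ ih => g ih) n with hb
    have hbsucc : ∀ n, b (n + 1) = g (b n) := fun n => rfl
    have hblt : ∀ n, b n < κ.ord := by
      intro n
      induction n with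
      | zero => exact hβ₀
      | succ n ih => rw [hbsucc]; exact (hg (b n) ih).2.1
    have hbmono : StrictMono b := by
      apply strictMono_nat_of_lt_succ
      intro n
      rw [hbsucc]
      exact (hg (b n) (hblt n)).1
    set s := ⨆ n, b n with hs
    have hslt : s < κ.ord := ksup_nat_lt hreg hunc hblt
    have hble : ∀ n, b n ≤ s := fun n => le_ciSup (Ordinal.bddAbove_range _) n
    have hlts : ∀ n, b n < s := fun n => (hbmono (Nat.lt_succ_self n)).trans_le (hble (n + 1))
    refine ⟨s, ⟨hslt, fun j hj => ?_⟩, hble 0⟩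
    obtain ⟨n, hn⟩ := exists_lt_of_lt_iSup hj
    have hmem : ∀ m, n ≤ m → b (m + 1) ∈ C j := by
      intro m hm
      rw [hbsucc]
      exact (hg (b m) (hblt m)).2.2 j (hn.trans_le (hbmono.monotone hm))
    have hpos : 0 < s := lt_of_le_of_lt ((zero_le : 0 ≤ b 0)) (hlts 0)
    refine club_mem_of_cofinal (hC j (hj.trans hslt)) hslt hpos ?_
    intro x hx
    obtain ⟨m, hxm⟩ := exists_lt_of_lt_iSup hx
    refine ⟨b (max m n + 1), hmem (max m n) (le_max_right m n), ?_, hlts (max m n + 1)⟩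
    exact hxm.trans_le (hbmono.monotone ((le_max_left m n).trans (Nat.le_succ _)))
  · -- closed
    intro β hβ hne hsup
    refine ⟨hβ, fun j hj => ?_⟩
    have hcof : ∀ x < β, ∃ y, (y ∈ {β | β < κ.ord ∧ ∀ j < β, β ∈ C j}) ∧ x < y ∧ y < β := by
      intro x hx
      obtain ⟨y, hy, hxy⟩ := exists_gt_of_sSup_eq hne hsup hx
      exact ⟨y, hy.1, hxy, hy.2⟩
    refine club_mem_of_cofinal (hC j (hj.trans hβ)) hβ (pos_iff_ne_zero.2 ?_) ?_
    · rintro rfl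
      exact absurd hj (not_lt_of_ge (zero_le : 0 ≤ j))
    · intro x hx
      obtain ⟨y, hy, hxy, hyβ⟩ := hcof (max x j) (max_lt hx hj)
      exact ⟨y, hy.2 j ((le_max_right x j).trans_lt hxy), (le_max_left x j).trans_lt hxy, hyβ⟩

/-- The set of accumulation points (below `α`) of a set cofinal in `α` is club in `α`,
provided `α` has uncountable cofinality. -/
lemma isClubIn_acc_inter_Iio {C : Set Ordinal.{0}} {α : Ordinal.{0}} (hα : Cardinal.aleph0 < α.cof)
    (hC : ∀ β < α, ∃ γ ∈ C, β < γ ∧ γ < α) : IsClubIn (acc C ∩ Set.Iio α) α := by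
  refine ⟨fun x hx => hx.2, ?_, ?_⟩
  · -- unbounded
    intro β₀ hβ₀
    have hstep : ∀ x, ∃ y, x < α → (y ∈ C ∧ x < y ∧ y < α) := by
      intro x
      by_cases hx : x < α
      · obtain ⟨y, hy, h1, h2⟩ := hC x hx
        exact ⟨y, fun _ => ⟨hy, h1, h2⟩⟩
      · exact ⟨0, fun h => absurd h hx⟩
    choose g hg using hstep
    set b : ℕ → Ordinal := fun n => Nat.rec (g β₀) (fun _ ih => g ih) n with hb
    have hbsucc : ∀ n, b (n + 1) = g (b n) := fun n => rfl
    have hb0 : b 0 ∈ C ∧ β₀ < b 0 ∧ b 0 < α := hg β₀ hβ₀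
    have hblt : ∀ n, b n ∈ C ∧ b n < α := by
      intro n
      induction n with
      | zero => exact ⟨hb0.1, hb0.2.2⟩
      | succ n ih =>
        rw [hbsucc]
        exact ⟨(hg (b n) ih.2).1, (hg (b n) ih.2).2.2⟩
    have hbmono : StrictMono b := by
      apply strictMono_nat_of_lt_succ
      intro n
      rw [hbsucc]
      exact (hg (b n) (hblt n).2).2.1
    set s := ⨆ n, b n with hs
    have hslt : s < α := by
      rw [hs]
      refine Ordinal.iSup_lt_ord (f := b) ?_ fun n => (hblt n).2
      rw [Cardinal.mk_nat]
      exact hα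
    have hble : ∀ n, b n ≤ s := fun n => le_ciSup (Ordinal.bddAbove_range _) n
    have hlts : ∀ n, b n < s := fun n => (hbmono (Nat.lt_succ_self n)).trans_le (hble (n + 1))
    have hpos : 0 < s := lt_of_le_of_lt ((zero_le : 0 ≤ b 0)) (hlts 0)
    refine ⟨s, ⟨mem_acc_of_cofinal hpos ?_, hslt⟩, (hb0.2.1.le.trans (hble 0))⟩
    intro x hx
    rw [hs] at hx
    obtain ⟨m, hxm⟩ := exists_lt_of_lt_iSup hx
    exact ⟨b m, (hblt m).1, hxm, hlts m⟩
  · -- closed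
    intro β hβ hne hsup
    obtain ⟨δ, ⟨⟨hδacc, hδα⟩, hδβ⟩⟩ := hne
    have hne' : ((acc C ∩ Set.Iio α) ∩ Set.Iio β).Nonempty := ⟨δ, ⟨⟨hδacc, hδα⟩, hδβ⟩⟩
    have hpos : 0 < β := lt_of_le_of_lt ((zero_le : 0 ≤ δ)) hδβ
    refine ⟨mem_acc_of_cofinal hpos ?_, hβ⟩
    intro x hx
    obtain ⟨y, ⟨⟨hyacc, _⟩, hyβ⟩, hxy⟩ :=
      exists_gt_of_sSup_eq hne' hsup hx
    obtain ⟨z, hzC, hxz, hzy⟩ := acc_exists_gt hyacc hxy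
    exact ⟨z, hzC, hxz, hzy.trans hyβ⟩

end SolovayProof

namespace SolovayProof

open Ordinal Set Cardinal Order

variable {κ : Cardinal.{0}} (hreg : κ.IsRegular) (hunc : Cardinal.aleph0 < κ)

lemma stat_mono {S T : Set Ordinal.{0}} (hS : IsStationaryIn S κ.ord) (hsub : S ⊆ T)
    (hT : T ⊆ Set.Iio κ.ord) : IsStationaryIn T κ.ord := by
  refine ⟨hT, fun C hC => ?_⟩
  obtain ⟨x, hxS, hxC⟩ := hS.2 C hC
  exact ⟨x, hsub hxS, hxC⟩

include hreg hunc in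
lemma stat_inter_club {S C : Set Ordinal.{0}} (hS : IsStationaryIn S κ.ord)
    (hC : IsClubIn C κ.ord) : IsStationaryIn (S ∩ C) κ.ord := by
  refine ⟨fun x hx => hS.1 hx.1, fun D hD => ?_⟩
  obtain ⟨x, hxS, hxCD⟩ := hS.2 (C ∩ D) (isClubIn_inter hreg hunc hC hD)
  exact ⟨x, ⟨hxS, hxCD.1⟩, hxCD.2⟩

lemma not_stat_iff {S : Set Ordinal.{0}} (hsub : S ⊆ Set.Iio κ.ord) :
    ¬ IsStationaryIn S κ.ord ↔ ∃ C, IsClubIn C κ.ord ∧ S ∩ C = ∅ := by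
  constructor
  · intro h
    rw [IsStationaryIn, not_and_or] at h
    rcases h with h | h
    · exact absurd hsub h
    · push_neg at h
      obtain ⟨C, hC, hSC⟩ := h
      exact ⟨C, hC, hSC⟩
  · rintro ⟨C, hC, hSC⟩ ⟨_, h⟩
    exact Set.not_nonempty_iff_eq_empty.2 hSC (h C hC)

include hreg hunc in
lemma stat_of_union {X Y : Set Ordinal.{0}} (hXY : IsStationaryIn (X ∪ Y) κ.ord)
    (hX : ¬ IsStationaryIn X κ.ord) : IsStationaryIn Y κ.ord := by
  have hXsub : X ⊆ Set.Iio κ.ord := fun x hx => hXY.1 (Set.mem_union_left Y hx)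
  have hYsub : Y ⊆ Set.Iio κ.ord := fun x hx => hXY.1 (Set.mem_union_right X hx)
  obtain ⟨C, hC, hXC⟩ := (not_stat_iff hXsub).1 hX
  refine ⟨hYsub, fun D hD => ?_⟩
  obtain ⟨x, hxXY, hxC, hxD⟩ := hXY.2 (C ∩ D) (isClubIn_inter hreg hunc hC hD)
  rcases hxXY with hx | hx
  · exact (Set.eq_empty_iff_forall_notMem.1 hXC x ⟨hx, hxC⟩).elim
  · exact ⟨x, hx, hxD⟩

include hreg in
lemma stat_exists_gt {S : Set Ordinal.{0}} (hS : IsStationaryIn S κ.ord) {β : Ordinal}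
    (hβ : β < κ.ord) : ∃ α ∈ S, β < α := by
  obtain ⟨x, hxS, hx1, _⟩ := hS.2 _ (isClubIn_Ioi hreg hβ)
  exact ⟨x, hxS, hx1⟩

lemma stat_nonempty {S : Set Ordinal.{0}} (hS : IsStationaryIn S κ.ord) : S.Nonempty := by
  obtain ⟨x, hxS, _⟩ := hS.2 _ (isClubIn_Iio (κ := κ))
  exact ⟨x, hxS⟩

include hreg hunc in
/-- Fodor's lemma. -/
lemma fodor {S : Set Ordinal.{0}} (hS : IsStationaryIn S κ.ord) (f : Ordinal → Ordinal)
    (hf : ∀ α ∈ S, f α < α) : ∃ γ, IsStationaryIn {α ∈ S | f α = γ} κ.ord := by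
  by_contra hcon
  push_neg at hcon
  have hsub : ∀ γ, {α ∈ S | f α = γ} ⊆ Set.Iio κ.ord := fun γ x hx => hS.1 hx.1
  have hclub : ∀ γ, ∃ C, IsClubIn C κ.ord ∧ {α ∈ S | f α = γ} ∩ C = ∅ :=
    fun γ => (not_stat_iff (hsub γ)).1 (hcon γ)
  choose C hC hCdisj using hclub
  obtain ⟨α, hαS, hακ, hαdiag⟩ :=
    hS.2 _ (isClubIn_diagInter hreg hunc (fun j _ => hC j))
  have hfα := hf α hαS
  have : α ∈ {x ∈ S | f x = f α} ∩ C (f α) := ⟨⟨hαS, rfl⟩, hαdiag (f α) hfα⟩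
  rw [hCdisj (f α)] at this
  exact this

/-- Cofinal families indexed by `(cof α).ord`. -/
lemma exists_cofinal_family (α : Ordinal.{0}) :
    ∃ a : Ordinal → Ordinal, (∀ ξ < α.cof.ord, a ξ < α) ∧ ∀ β < α, ∃ ξ < α.cof.ord, β ≤ a ξ := by
  obtain ⟨f, hf⟩ := Ordinal.exists_fundamental_sequence α
  refine ⟨fun ξ => if h : ξ < α.cof.ord then f ξ h else 0, fun ξ hξ => ?_, fun β hβ => ?_⟩
  · simp only [dif_pos hξ]
    rw [← hf.blsub_eq]
    exact Ordinal.lt_blsub _ ξ hξ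
  · rw [← hf.blsub_eq, Ordinal.lt_blsub_iff] at hβ
    obtain ⟨ξ, hξ, hβξ⟩ := hβ
    exact ⟨ξ, hξ, by simpa only [dif_pos hξ] using hβξ⟩

end SolovayProof

namespace SolovayProof

open Ordinal Set Cardinal Order

variable {κ : Cardinal.{0}} (hreg : κ.IsRegular) (hunc : Cardinal.aleph0 < κ)

include hreg hunc in
/-- The key lemma: every stationary set has a stationary subset carrying a regressive
function taking arbitrarily large values on stationary sets. -/
lemma main_lemma {E : Set Ordinal.{0}} (hE : IsStationaryIn E κ.ord) :
    ∃ (W : Set Ordinal.{0}) (f : Ordinal.{0} → Ordinal.{0}), W ⊆ E ∧ IsStationaryIn W κ.ord ∧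
      (∀ α ∈ W, f α < α) ∧ ∀ β < κ.ord, IsStationaryIn {α ∈ W | β ≤ f α} κ.ord := by
  have hklim := klim hreg
  set E1 : Set Ordinal := E ∩ ({α | IsSuccLimit α} ∩ Set.Iio κ.ord) with hE1
  have hE1stat : IsStationaryIn E1 κ.ord :=
    stat_inter_club hreg hunc hE (isClubIn_limits hreg hunc)
  set A : Set Ordinal := {α ∈ E1 | α.cof.ord < α} with hA
  set B : Set Ordinal := {α ∈ E1 | α.cof.ord = α} with hB
  have hAsub : A ⊆ Set.Iio κ.ord := fun x hx => hE1stat.1 hx.1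
  have hBsub : B ⊆ Set.Iio κ.ord := fun x hx => hE1stat.1 hx.1
  by_cases hAstat : IsStationaryIn A κ.ord
  · -- Case 1 : stationarily many points of small cofinality
    obtain ⟨θ, hθ⟩ := fodor hreg hunc hAstat (fun α => α.cof.ord) (fun α hα => hα.2)
    set W : Set Ordinal := {α ∈ A | α.cof.ord = θ} with hW
    have hWstat : IsStationaryIn W κ.ord := hθ
    obtain ⟨α₀, hα₀⟩ := stat_nonempty hWstat
    have hθκ : θ < κ.ord := hα₀.2 ▸ (hα₀.1.2.trans_le (hE1stat.1 hα₀.1.1).le)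
    have hθcard : θ.card < κ := Cardinal.lt_ord.1 hθκ
    have hseq : ∀ α, ∃ a : Ordinal → Ordinal, α ∈ W →
        ((∀ ξ < θ, a ξ < α) ∧ ∀ β < α, ∃ ξ < θ, β ≤ a ξ) := by
      intro α
      obtain ⟨a, ha1, ha2⟩ := exists_cofinal_family α
      refine ⟨a, fun hα => ?_⟩
      rw [hα.2] at ha1 ha2
      exact ⟨ha1, ha2⟩
    choose a ha using hseq
    by_cases hclaim : ∃ ξ < θ, ∀ β < κ.ord, IsStationaryIn {α ∈ W | β ≤ a α ξ} κ.ord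
    · obtain ⟨ξ, hξθ, hstat⟩ := hclaim
      refine ⟨W, fun α => a α ξ, fun x hx => hx.1.1.1, hWstat,
        fun α hα => (ha α hα).1 ξ hξθ, hstat⟩
    · exfalso
      push_neg at hclaim
      have hneg : ∀ ξ, ∃ β C, ξ < θ → (β < κ.ord ∧ IsClubIn C κ.ord ∧
          ∀ α ∈ W, α ∈ C → a α ξ < β) := by
        intro ξ
        by_cases hξ : ξ < θ
        · obtain ⟨β, hβκ, hns⟩ := hclaim ξ hξ
          obtain ⟨C, hC, hdisj⟩ := (not_stat_iff (fun x hx => hWstat.1 hx.1)).1 hns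
          refine ⟨β, C, fun _ => ⟨hβκ, hC, fun α hαW hαC => ?_⟩⟩
          by_contra hle
          push_neg at hle
          exact Set.eq_empty_iff_forall_notMem.1 hdisj α ⟨⟨hαW, hle⟩, hαC⟩
        · exact ⟨0, Set.Iio κ.ord, fun h => absurd h hξ⟩
      choose βf Cf hβC using hneg
      have hCstar : IsClubIn {x | x < κ.ord ∧ ∀ ξ < θ, x ∈ Cf ξ} κ.ord :=
        isClubIn_iInter hreg hunc hθcard (fun ξ hξ => (hβC ξ hξ).2.1)
      have hβstar : Ordinal.bsup θ (fun ξ _ => βf ξ) < κ.ord :=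
        Ordinal.bsup_lt_ord (by rwa [hreg.cof_eq]) (fun ξ hξ => (hβC ξ hξ).1)
      obtain ⟨α, hαW, hαC⟩ :=
        hWstat.2 _ (isClubIn_inter hreg hunc hCstar (isClubIn_Ioi hreg hβstar))
      obtain ⟨ξ, hξθ, hge⟩ := (ha α hαW).2 _ hαC.2.1
      have hlt : a α ξ < βf ξ := (hβC ξ hξθ).2.2 α hαW (hαC.1.2 ξ hξθ)
      exact (Ordinal.le_bsup (fun ξ _ => βf ξ) ξ hξθ).not_gt (hge.trans_lt hlt)
  · -- Case 2 : stationarily many regular points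
    have hE1sub : E1 ⊆ A ∪ B := by
      intro x hx
      have hle : x.cof.ord ≤ x :=
        (Cardinal.ord_le_ord.2 (Ordinal.cof_le_card x)).trans (Cardinal.ord_card_le x)
      rcases lt_or_eq_of_le hle with h | h
      · exact Or.inl ⟨hx, h⟩
      · exact Or.inr ⟨hx, h⟩
    have hBstat : IsStationaryIn B κ.ord :=
      stat_of_union hreg hunc
        (stat_mono hE1stat hE1sub (Set.union_subset hAsub hBsub)) hAstat
    set B' : Set Ordinal := {α ∈ B | ω < α} with hB'
    have hB'sub : B' ⊆ Set.Iio κ.ord := fun x hx => hBsub hx.1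
    have hωκ : (ω : Ordinal) < κ.ord := Cardinal.lt_ord.2 (by rwa [Ordinal.card_omega0])
    have hB'stat : IsStationaryIn B' κ.ord := by
      refine stat_of_union hreg hunc (X := {α ∈ B | α ≤ ω}) ?_ ?_
      · refine stat_mono hBstat (fun x hx => ?_) ?_
        · rcases le_or_gt x ω with h | h
          · exact Or.inl ⟨hx, h⟩
          · exact Or.inr ⟨hx, h⟩
        · exact Set.union_subset (fun x hx => hBsub hx.1) hB'sub
      · refine (not_stat_iff (fun x hx => hBsub hx.1)).2
          ⟨Set.Ioi ω ∩ Set.Iio κ.ord, isClubIn_Ioi hreg hωκ, ?_⟩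
        exact Set.eq_empty_iff_forall_notMem.2 (fun x hx => hx.1.2.not_gt hx.2.1)
    have hcofunc : ∀ α ∈ B', Cardinal.aleph0 < α.cof := by
      intro α hα
      by_contra hle
      push_neg at hle
      have h1 : α.cof.ord ≤ ω := by
        calc α.cof.ord ≤ Cardinal.aleph0.ord := Cardinal.ord_le_ord.2 hle
          _ = ω := Cardinal.ord_aleph0
      rw [hα.1.2] at h1
      exact hα.2.not_ge h1
    set W₀ : Set Ordinal := {α ∈ B' | ∃ c, IsClubIn c α ∧ c ∩ B' = ∅} with hW₀
    have hW₀sub : W₀ ⊆ Set.Iio κ.ord := fun x hx => hB'sub hx.1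
    have hW₀stat : IsStationaryIn W₀ κ.ord := by
      refine ⟨hW₀sub, fun C hC => ?_⟩
      have hCunb : ∀ β < κ.ord, ∃ γ ∈ C, β < γ ∧ γ < κ.ord :=
        fun β hβ => club_exists_gt hC hklim hβ
      have haccC : IsClubIn (acc C ∩ Set.Iio κ.ord) κ.ord :=
        isClubIn_acc_inter_Iio (by rw [hreg.cof_eq]; exact hunc) hCunb
      have hTne : (B' ∩ (acc C ∩ Set.Iio κ.ord)).Nonempty := hB'stat.2 _ haccC
      obtain ⟨hαB', hαacc, hακ⟩ := csInf_mem hTne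
      set α := sInf (B' ∩ (acc C ∩ Set.Iio κ.ord)) with hα
      have hαC : α ∈ C := hC.2.2 α hακ hαacc.1 hαacc.2
      have hclubα : IsClubIn (acc C ∩ Set.Iio α) α :=
        isClubIn_acc_inter_Iio (hcofunc α hαB') (fun β hβ => acc_exists_gt hαacc hβ)
      refine ⟨α, ⟨hαB', acc C ∩ Set.Iio α, hclubα, ?_⟩, hαC⟩
      rw [Set.eq_empty_iff_forall_notMem]
      rintro δ ⟨⟨hδacc, hδα⟩, hδB'⟩
      have hle : sInf (B' ∩ (acc C ∩ Set.Iio κ.ord)) ≤ δ :=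
        csInf_le (OrderBot.bddBelow _) ⟨hδB', hδacc, Set.mem_Iio.2 ((Set.mem_Iio.1 hδα).trans hακ)⟩
      rw [← hα] at hle
      exact absurd (Set.mem_Iio.1 hδα) (not_lt.2 hle)
    have hsel : ∀ α, ∃ (c : Set Ordinal) (e : Ordinal → Ordinal), α ∈ W₀ →
        (IsClubIn c α ∧ c ∩ B' = ∅ ∧ ∀ ξ < α, e ξ ∈ c ∧ ξ ≤ e ξ) := by
      intro α
      by_cases hα : α ∈ W₀
      · obtain ⟨c, hc, hcB⟩ := hα.2
        have he : ∀ ξ, ∃ y, ξ < α → (y ∈ c ∧ ξ ≤ y) := by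
          intro ξ
          by_cases hξ : ξ < α
          · obtain ⟨y, hy, hξy⟩ := hc.2.1 ξ hξ
            exact ⟨y, fun _ => ⟨hy, hξy⟩⟩
          · exact ⟨0, fun h => absurd h hξ⟩
        choose e he' using he
        exact ⟨c, e, fun _ => ⟨hc, hcB, fun ξ hξ => he' ξ hξ⟩⟩
      · exact ⟨∅, fun _ => 0, fun h => absurd h hα⟩
    choose cc ee hcc using hsel
    by_cases hclaim : ∃ ξ < κ.ord, ∀ β < κ.ord,
        IsStationaryIn {α ∈ W₀ | ξ < α ∧ β ≤ ee α ξ} κ.ord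
    · obtain ⟨ξ, hξκ, hstat⟩ := hclaim
      refine ⟨{α ∈ W₀ | ξ < α}, fun α => ee α ξ, fun x hx => hx.1.1.1.1.1, ?_, ?_, ?_⟩
      · refine stat_mono (hstat 0 hklim.pos) (fun x hx => ⟨hx.1, hx.2.1⟩)
          (fun x hx => hW₀sub hx.1)
      · intro α hα
        exact ((hcc α hα.1).1).1 (((hcc α hα.1).2.2 ξ hα.2).1)
      · intro β hβ
        exact stat_mono (hstat β hβ) (fun x hx => ⟨⟨hx.1, hx.2.1⟩, hx.2.2⟩)
          (fun x hx => hW₀sub hx.1.1)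
    · exfalso
      push_neg at hclaim
      have hneg : ∀ ξ, ∃ β C, ξ < κ.ord → (β < κ.ord ∧ IsClubIn C κ.ord ∧
          ∀ α ∈ W₀, α ∈ C → ξ < α → ee α ξ < β) := by
        intro ξ
        by_cases hξ : ξ < κ.ord
        · obtain ⟨β, hβκ, hns⟩ := hclaim ξ hξ
          obtain ⟨C, hC, hdisj⟩ := (not_stat_iff (fun x hx => hW₀sub hx.1)).1 hns
          refine ⟨β, C, fun _ => ⟨hβκ, hC, fun α hαW hαC hξα => ?_⟩⟩
          by_contra hle
          push_neg at hle
          exact Set.eq_empty_iff_forall_notMem.1 hdisj α ⟨⟨hαW, hξα, hle⟩, hαC⟩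
        · exact ⟨0, Set.Iio κ.ord, fun h => absurd h hξ⟩
      choose βf Cf hβC using hneg
      set D : Set Ordinal :=
        {x | x < κ.ord ∧ ∀ ξ < x, x ∈ (Cf ξ ∩ (Set.Ioi (βf ξ) ∩ Set.Iio κ.ord))} with hD
      have hDclub : IsClubIn D κ.ord := by
        refine isClubIn_diagInter hreg hunc (fun ξ hξ => ?_)
        exact isClubIn_inter hreg hunc (hβC ξ hξ).2.1 (isClubIn_Ioi hreg (hβC ξ hξ).1)
      have haccD : IsClubIn (acc D ∩ Set.Iio κ.ord) κ.ord :=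
        isClubIn_acc_inter_Iio (by rw [hreg.cof_eq]; exact hunc)
          (fun β hβ => club_exists_gt hDclub hklim hβ)
      obtain ⟨γ, hγB', hγacc, hγκ⟩ := hB'stat.2 _ haccD
      obtain ⟨α, hαW₀, hαD, hγα, hακ⟩ :=
        hW₀stat.2 _ (isClubIn_inter hreg hunc hDclub (isClubIn_Ioi hreg hγκ))
      obtain ⟨hcα, hcB', he⟩ := hcc α hαW₀
      have hγlim : IsSuccLimit γ := hγB'.1.1.2.1
      have hkey : ∀ ξ < γ, ee α ξ ∈ cc α ∧ ξ ≤ ee α ξ ∧ ee α ξ < γ := by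
        intro ξ hξγ
        have hξα : ξ < α := hξγ.trans hγα
        obtain ⟨δ, hδD, hξδ, hδγ⟩ := acc_exists_gt hγacc hξγ
        have hβδ : βf ξ < δ := (hδD.2 ξ hξδ).2.1
        have hlt : ee α ξ < βf ξ :=
          (hβC ξ (hξγ.trans hγκ)).2.2 α hαW₀ (hαD.2 ξ hξα).1 hξα
        exact ⟨(he ξ hξα).1, (he ξ hξα).2, hlt.trans (hβδ.trans hδγ)⟩
      have hγc : γ ∈ cc α := by
        refine club_mem_of_cofinal hcα hγα hγlim.pos ?_
        intro x hx
        have hx1 : x + 1 < γ := by rw [Ordinal.add_one_eq_succ]; exact hγlim.succ_lt hx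
        obtain ⟨h1, h2, h3⟩ := hkey (x + 1) hx1
        refine ⟨ee α (x + 1), h1, lt_of_lt_of_le ?_ h2, h3⟩
        rw [Ordinal.add_one_eq_succ]
        exact lt_succ x
      exact Set.eq_empty_iff_forall_notMem.1 hcB' γ ⟨hγc, hγB'⟩

end SolovayProof

open SolovayProof

/-- Solovay's theorem: if `κ` is an uncountable regular cardinal, then every
stationary subset of `κ` can be decomposed as the disjoint union of `κ` many
stationary subsets of `κ`. -/
theorem solovay_decomposition (κ : Cardinal) (hreg : κ.IsRegular) (hunc : Cardinal.aleph0 < κ)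
    (E : Set Ordinal) (hE : IsStationaryIn E κ.ord) :
    ∃ (ι : Type) (S : ι → Set Ordinal), Cardinal.mk ι = κ ∧
      (∀ i, IsStationaryIn (S i) κ.ord) ∧
      Pairwise (Function.onFun Disjoint S) ∧ (⋃ i, S i) = E := by
  classical
  obtain ⟨W, f, hWE, hWstat, hregf, hfstat⟩ := main_lemma hreg hunc hE
  set G : Set Ordinal := {γ | γ < κ.ord ∧ IsStationaryIn {α ∈ W | f α = γ} κ.ord} with hG
  have hGunb : ∀ β < κ.ord, ∃ γ, γ ∈ G ∧ β ≤ γ := by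
    intro β hβ
    obtain ⟨γ, hγ⟩ := fodor hreg hunc (hfstat β hβ) f (fun α hα => hregf α hα.1)
    obtain ⟨α, hα⟩ := stat_nonempty hγ
    have hγκ : γ < κ.ord := hα.2 ▸ (hregf α hα.1.1).trans (hWstat.1 hα.1.1)
    have hβγ : β ≤ γ := hα.2 ▸ hα.1.2
    have hstat : IsStationaryIn {α ∈ W | f α = γ} κ.ord :=
      stat_mono hγ (fun x hx => ⟨hx.1.1, hx.2⟩) (fun x hx => hWstat.1 hx.1)
    exact ⟨γ, ⟨hγκ, hstat⟩, hβγ⟩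
  set G' : Set Ordinal := G ∪ Set.Ici κ.ord with hG'
  have hG'unb : ¬ BddAbove G' := by
    rintro ⟨u, hu⟩
    have hmem : max u κ.ord + 1 ∈ G' := by
      refine Or.inr (Set.mem_Ici.2 ((le_max_right u κ.ord).trans ?_))
      rw [Ordinal.add_one_eq_succ]
      exact (Order.lt_succ _).le
    have h2 : u < max u κ.ord + 1 := by
      refine (le_max_left u κ.ord).trans_lt ?_
      rw [Ordinal.add_one_eq_succ]
      exact Order.lt_succ _
    exact h2.not_ge (hu hmem)
  have hklim := klim hreg
  have henum : ∀ j, j < κ.ord → Ordinal.enumOrd G' j ∈ G ∧ Ordinal.enumOrd G' j < κ.ord := by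
    intro j
    induction j using Ordinal.induction with
    | h j IH =>
      intro hj
      have hμ : Ordinal.bsup j (fun b _ => Ordinal.enumOrd G' b + 1) < κ.ord := by
        refine Ordinal.bsup_lt_ord (by rw [hreg.cof_eq]; exact Cardinal.lt_ord.1 hj) ?_
        intro b hb
        rw [Ordinal.add_one_eq_succ]
        exact hklim.succ_lt (IH b hb (hb.trans hj)).2
      obtain ⟨γ, hγG, hμγ⟩ := hGunb _ hμ
      have hle : Ordinal.enumOrd G' j ≤ γ := by
        refine Ordinal.enumOrd_le_of_forall_lt (Or.inl hγG) ?_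
        intro b hb
        have h3 := Ordinal.le_bsup (fun b _ => Ordinal.enumOrd G' b + 1) b hb
        have h4 : Ordinal.enumOrd G' b < Ordinal.enumOrd G' b + 1 := by
          rw [Ordinal.add_one_eq_succ]; exact Order.lt_succ _
        exact h4.trans_le (h3.trans hμγ)
      have hlt : Ordinal.enumOrd G' j < κ.ord := hle.trans_lt hγG.1
      refine ⟨?_, hlt⟩
      rcases Ordinal.enumOrd_mem hG'unb j with h | h
      · exact h
      · exact absurd hlt (not_lt.2 h)
  have hne : Nonempty κ.ord.ToType := Ordinal.toType_nonempty_iff_ne_zero.2 hklim.pos.ne'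
  set q : κ.ord.ToType → Ordinal := fun i => ((Ordinal.ToType.mk (o := κ.ord)).symm i : Set.Iio κ.ord).1 with hq
  have hqlt : ∀ i, q i < κ.ord := fun i => ((Ordinal.ToType.mk (o := κ.ord)).symm i).2
  have hqinj : Function.Injective q := by
    intro i j h
    exact (Ordinal.ToType.mk (o := κ.ord)).symm.injective (Subtype.ext h)
  set g : κ.ord.ToType → Ordinal := fun i => Ordinal.enumOrd G' (q i) with hg
  have hgG : ∀ i, g i ∈ G := fun i => (henum (q i) (hqlt i)).1
  have hginj : Function.Injective g := by
    intro i j h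
    exact hqinj ((Ordinal.enumOrd_strictMono hG'unb).injective h)
  obtain ⟨i₀⟩ := hne
  set P : Ordinal → Set Ordinal := fun γ => {α ∈ W | f α = γ} with hP
  have hPsub : ∀ γ, P γ ⊆ Set.Iio κ.ord := fun γ x hx => hWstat.1 hx.1
  set U : Set Ordinal := ⋃ (i : κ.ord.ToType) (_ : i ≠ i₀), P (g i) with hU
  have hUsub : U ⊆ E := by
    intro x hx
    obtain ⟨i, _, hxP⟩ := Set.mem_iUnion₂.1 hx
    exact hWE hxP.1
  refine ⟨κ.ord.ToType, fun i => if i = i₀ then E \ U else P (g i), ?_, ?_, ?_, ?_⟩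
  · rw [Cardinal.mk_toType, Cardinal.card_ord]
  · intro i
    by_cases hi : i = i₀
    · simp only [if_pos hi]
      refine stat_mono (hgG i₀).2 ?_ (fun x hx => hE.1 hx.1)
      intro x hx
      refine ⟨hWE hx.1, fun hxU => ?_⟩
      obtain ⟨i', hi', hxP⟩ := Set.mem_iUnion₂.1 hxU
      exact hi' (hginj (hxP.2.symm.trans hx.2))
    · simp only [if_neg hi]
      exact (hgG i).2
  · intro i j hij
    simp only [Function.onFun]
    refine Set.disjoint_left.2 fun x hxi hxj => ?_
    by_cases hi : i = i₀
    · rw [if_pos hi] at hxi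
      rw [if_neg (fun h : j = i₀ => hij (hi.trans h.symm))] at hxj
      exact hxi.2 (Set.mem_iUnion₂.2 ⟨j, fun h => hij (hi.trans h.symm), hxj⟩)
    · rw [if_neg hi] at hxi
      by_cases hj : j = i₀
      · rw [if_pos hj] at hxj
        exact hxj.2 (Set.mem_iUnion₂.2 ⟨i, hi, hxi⟩)
      · rw [if_neg hj] at hxj
        exact hij (hginj (hxi.2.symm.trans hxj.2))
  · ext x
    simp only [Set.mem_iUnion]
    constructor
    · rintro ⟨i, hxi⟩
      by_cases hi : i = i₀
      · rw [if_pos hi] at hxi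
        exact hxi.1
      · rw [if_neg hi] at hxi
        exact hWE hxi.1
    · intro hxE
      by_cases hxU : x ∈ U
      · obtain ⟨i', hi', hxP⟩ := Set.mem_iUnion₂.1 hxU
        exact ⟨i', by rw [if_neg hi']; exact hxP⟩
      · exact ⟨i₀, by rw [if_pos rfl]; exact ⟨hxE, hxU⟩⟩
end

section
/- The normal closure of the subgroup φ(F_a) in F_b is all of F_b. -/
/-- The normal closure of the subgroup `φ(F_a)` in `F_b` is all of `F_b`. -/
theorem normalClosure_range_constrPhi (X Y : Type) :
    Subgroup.normalClosure ((constrPhi X Y).range : Set (FreeGroup (ConstrGen X Y))) = ⊤ := by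
  set N := Subgroup.normalClosure ((constrPhi X Y).range : Set (FreeGroup (ConstrGen X Y)))
    with hN
  have hrange : ∀ w, constrPhi X Y w ∈ N := fun w =>
    Subgroup.subset_normalClosure ⟨w, rfl⟩
  have hy : FreeGroup.of (yGen X Y) ∈ N := by
    have h := hrange (FreeGroup.of (yGen X Y))
    simpa [constrPhi, yGen] using h
  have hgen : ∀ g : ConstrGen X Y, FreeGroup.of g ∈ N := by
    rintro (x | w | u | n)
    · simpa [constrPhi] using hrange (FreeGroup.of (Sum.inl x))
    · simpa [constrPhi] using hrange (FreeGroup.of (Sum.inr (Sum.inl w)))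
    · cases u; exact hy
    · have ht := hrange (FreeGroup.of (nGen X Y n))
      have hphit : constrPhi X Y (FreeGroup.of (nGen X Y n)) =
          FreeGroup.of (yGen X Y) * (FreeGroup.of (nGen X Y (n + 1)))⁻¹ *
            FreeGroup.of (nGen X Y n) * FreeGroup.of (nGen X Y (n + 1)) := by
        simp [constrPhi, nGen]
      rw [hphit] at ht
      have ha : (FreeGroup.of (nGen X Y (n + 1)))⁻¹ * FreeGroup.of (nGen X Y n) *
          FreeGroup.of (nGen X Y (n + 1)) ∈ N := by
        have := N.mul_mem (N.inv_mem hy) ht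
        convert this using 1
        group
      have hconj := (Subgroup.normalClosure_normal
        (s := ((constrPhi X Y).range : Set (FreeGroup (ConstrGen X Y))))).conj_mem _ ha
        (FreeGroup.of (nGen X Y (n + 1)))
      have := hconj
      show FreeGroup.of (nGen X Y n) ∈ N
      convert this using 1
      group
  rw [eq_top_iff]
  intro g hg; clear hg
  induction g using FreeGroup.induction_on with
  | C1 => exact N.one_mem
  | of g => exact hgen g
  | inv_of g hg => exact N.inv_mem hg
  | mul a b ha hb => exact N.mul_mem ha hb
end
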